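/- Let Γa and Γb be nonnegative real numbers. Then Γa·Γb·(19 + 12·(Γa + Γb)) + (Γa − 1)² + (Γb − 1)² ≥ 1. -/
import Mathlib


theorem stmt_0 (Γa Γb : ℝ) (ha : 0 ≤ Γa) (hb : 0 ≤ Γb) :
    Γa * Γb * (19 + 12 * (Γa + Γb)) + (Γa - 1) ^ 2 + (Γb - 1) ^ 2 ≥ 1 := by
  nlinarith [sq_nonneg (Γa - Γb), sq_nonneg (Γa + Γb - 1), mul_nonneg ha hb, mul_nonneg (mul_nonneg ha hb) ha, mul_nonneg (mul_nonneg ha hb) hb, sq_nonneg (Γa + Γb), sq_nonneg (Γa*Γb)]
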